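/- Assume 2g − 2 + n > 0. The poset C_{g,n} of pairs (G,P) with G a stable graph of genus g with n legs and P ∈ C_G is connected, and the forgetful map C_{g,n} → S_{g,n}, (G,P) ↦ G, is a quotient of posets. -/

import Mathlib

/-!
Common combinatorial preliminaries: weighted graphs with legs, contractions,
spin structures, following Caporaso–Melo–Pacini, "Tropicalizing the moduli
space of spin curves".
-/

attribute [local instance] Classical.propDecidable

noncomputable section

/-- A weighted graph with legs.  Edges are recorded as elements of a finite
type `E` together with their (unordered) pair of endpoints `ends e : Sym2 V`
(a loop corresponds to a diagonal pair); legs are elements of a finite type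
`Lg` with an endpoint map `legEnd`; `w` is the weight function. -/
structure WLGraph : Type 1 where
  V : Type
  E : Type
  Lg : Type
  fV : Fintype V
  fE : Fintype E
  fL : Fintype Lg
  dV : DecidableEq V
  dE : DecidableEq E
  dL : DecidableEq Lg
  neV : Nonempty V
  ends : E → Sym2 V
  legEnd : Lg → V
  w : V → ℕ

attribute [instance] WLGraph.fV WLGraph.fE WLGraph.fL WLGraph.dV WLGraph.dE WLGraph.dL WLGraph.neV

namespace WLGraph

variable (G : WLGraph)

/-- The multiplicity of the vertex `v` in the edge `e` (`2` for a loop at `v`). -/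
def degMul (v : G.V) (e : G.E) : ℕ :=
  Sym2.lift ⟨fun a b => (if a = v then 1 else 0) + (if b = v then 1 else 0),
    fun _ _ => add_comm _ _⟩ (G.ends e)

/-- The degree of a vertex: number of non-leg half-edges ending at it. -/
def deg (v : G.V) : ℕ := ∑ e, G.degMul v e

/-- The number of legs ending at a vertex. -/
def legsAt (v : G.V) : ℕ := (Finset.univ.filter fun l => G.legEnd l = v).card

/-- The number of loops based at a vertex. -/
def loops (v : G.V) : ℕ := (Finset.univ.filter fun e => G.ends e = Sym2.diag v).card

/-- The boundary map `∂ : E_G → V_G` over `F₂`, sending an edge to the sum of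
its two endpoints. -/
def boundary : (G.E → ZMod 2) →ₗ[ZMod 2] (G.V → ZMod 2) where
  toFun x := fun v => ∑ e, x e * (G.degMul v e : ZMod 2)
  map_add' x y := by
    funext v
    simp [add_mul, Finset.sum_add_distrib]
  map_smul' c x := by
    funext v
    simp [Finset.mul_sum, mul_assoc]

/-- The `F₂`-indicator vector of a set of edges. -/
def indicator (P : Finset G.E) : G.E → ZMod 2 := fun e => if e ∈ P then 1 else 0

/-- A subset of edges is cyclic if it lies in the cycle space `C_G = ker ∂`,
i.e. its indicator vector is killed by the boundary map. -/
def IsCyclic (P : Finset G.E) : Prop := G.boundary (G.indicator P) = 0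

/-- Adjacency through an edge belonging to `P`. -/
def PAdj (P : Finset G.E) (u v : G.V) : Prop :=
  ∃ e ∈ P, u ∈ G.ends e ∧ v ∈ G.ends e

/-- The vertex set of the contraction `G/P`: connected components of `(V, P)`. -/
def CompV (P : Finset G.E) : Type := Quot (G.PAdj P)

instance (P : Finset G.E) : Finite (G.CompV P) := Quot.finite _
instance (P : Finset G.E) : Fintype (G.CompV P) := Fintype.ofFinite _
instance (P : Finset G.E) : Nonempty (G.CompV P) := G.neV.map (Quot.mk _)

/-- The set of vertices of `G` lying in a given component. -/
def fiberV (P : Finset G.E) (x : G.CompV P) : Finset G.V :=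
  Finset.univ.filter fun v => Quot.mk (G.PAdj P) v = x

/-- The set of edges of `P` lying in a given component. -/
def fiberE (P : Finset G.E) (x : G.CompV P) : Finset G.E :=
  P.filter fun e => ∀ v ∈ G.ends e, Quot.mk (G.PAdj P) v = x

/-- The weight of a vertex `x` of `G/P`: the genus of its preimage, i.e. the
sum of the weights of the vertices in the component plus its first Betti
number `#edges - #vertices + 1`. -/
def quotWeight (P : Finset G.E) (x : G.CompV P) : ℕ :=
  (∑ v ∈ G.fiberV P x, G.w v) + ((G.fiberE P x).card + 1 - (G.fiberV P x).card)

/-- Connectedness of the graph. -/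
def Connected : Prop := ∀ u v : G.V, Relation.EqvGen (G.PAdj Finset.univ) u v

/-- The number of connected components `c(G)`. -/
def numComp : ℕ := Nat.card (G.CompV Finset.univ)

/-- The first Betti number `b₁(G) = |E| - |V| + c(G)`. -/
def b1 : ℕ := Fintype.card G.E + G.numComp - Fintype.card G.V

/-- The genus `g(G) = Σ_v w(v) + b₁(G)`. -/
def genus : ℕ := (∑ v, G.w v) + G.b1

/-- The number of legs. -/
def numLegs : ℕ := Fintype.card G.Lg

/-- Stability: connected and `2w(v) - 2 + deg(v) + ℓ(v) > 0` at every vertex. -/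
def Stable : Prop :=
  G.Connected ∧ ∀ v : G.V, 2 < 2 * G.w v + G.deg v + G.legsAt v

/-- `G` is Eulerian (cyclic) if every vertex has even degree, i.e. the set of
all edges lies in the cycle space. -/
def Eulerian : Prop := G.IsCyclic Finset.univ

/-- A basic graph: a stable cyclic (Eulerian) graph of genus `≥ 2` with at
least one edge, all weights `≤ 1`, and `w(v) + deg(v) + ℓ(v) ≤ 4` at every
vertex with equality only if there is a loop at `v`. -/
def IsBasic : Prop :=
  G.Stable ∧ 2 ≤ G.genus ∧ Nonempty G.E ∧ G.Eulerian ∧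
  (∀ v, G.w v ≤ 1) ∧
  (∀ v, G.w v + G.deg v + G.legsAt v ≤ 4) ∧
  (∀ v, G.w v + G.deg v + G.legsAt v = 4 → 1 ≤ G.loops v)

/-- `c⁺`: the number of vertices of `G/P` of positive weight, i.e. the number
of connected components of `P̄` of positive genus. -/
def cPlus (P : Finset G.E) : ℕ :=
  (Finset.univ.filter fun x : G.CompV P => 0 < G.quotWeight P x).card

/-- The contracted graph `G/P`. -/
def contract (P : Finset G.E) : WLGraph where
  V := G.CompV P
  E := {e : G.E // e ∉ P}
  Lg := G.Lg
  fV := inferInstance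
  fE := inferInstance
  fL := G.fL
  dV := Classical.decEq _
  dE := inferInstance
  dL := G.dL
  neV := inferInstance
  ends := fun e => (G.ends e.1).map (Quot.mk (G.PAdj P))
  legEnd := fun l => Quot.mk (G.PAdj P) (G.legEnd l)
  w := G.quotWeight P

/-- An ordered pair of endpoints of an edge. -/
def endPair (e : G.E) : G.V × G.V := Classical.choose (Quot.exists_rep (G.ends e))

end WLGraph

/-- A spin structure on a graph `G`: a cyclic subset `P` of edges and a sign
function on the vertices of `G/P` vanishing at all vertices of weight `0`. -/
structure SpinStructure (G : WLGraph) where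
  P : Finset G.E
  cyclic : G.IsCyclic P
  s : G.CompV P → ZMod 2
  vanish : ∀ x, G.quotWeight P x = 0 → s x = 0

/-- The parity of a spin structure: the parity of `Σ_{v ∈ V(G/P)} s(v)`. -/
def SpinStructure.parity {G : WLGraph} (σ : SpinStructure G) : ZMod 2 := ∑ x, σ.s x

/-- A contraction of graphs `γ : G → G' = G/F`: the edges of `G'` are
identified with `E(G) ∖ F`, the legs of `G'` with those of `G`; the vertex
map is surjective, its fibers are exactly the connected components of
`(V(G), F)`, endpoints and legs are compatible, and the weight of a vertex of
`G'` is the genus of its preimage. -/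
structure Contraction (G G' : WLGraph) where
  F : Finset G.E
  vMap : G.V → G'.V
  eEquiv : G'.E ≃ {e : G.E // e ∉ F}
  lEquiv : G'.Lg ≃ G.Lg
  vSurj : Function.Surjective vMap
  ends_compat : ∀ e' : G'.E, G'.ends e' = (G.ends (eEquiv e').1).map vMap
  leg_compat : ∀ l' : G'.Lg, G'.legEnd l' = vMap (G.legEnd (lEquiv l'))
  collapse : ∀ e ∈ F, ∀ u ∈ G.ends e, ∀ v ∈ G.ends e, vMap u = vMap v
  fiber_conn : ∀ u v : G.V, vMap u = vMap v → Relation.EqvGen (G.PAdj F) u v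
  w_compat : ∀ v' : G'.V,
    G'.w v' = (∑ v ∈ Finset.univ.filter (fun v => vMap v = v'), G.w v)
      + (((F.filter fun e => ∀ u ∈ G.ends e, vMap u = v').card + 1)
          - (Finset.univ.filter fun v => vMap v = v').card)

namespace Contraction

variable {G G' : WLGraph} (γ : Contraction G G')

/-- The induced map `γ^E_* : E_G → E_{G'}` (γ^E_*(e) = e if e ∉ F, 0 else). -/
def eStar : (G.E → ZMod 2) →ₗ[ZMod 2] (G'.E → ZMod 2) where
  toFun x := fun e' => x (γ.eEquiv e').1
  map_add' _ _ := rfl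
  map_smul' _ _ := rfl

/-- The induced map `γ^V_* : V_G → V_{G'}`. -/
def vStar : (G.V → ZMod 2) →ₗ[ZMod 2] (G'.V → ZMod 2) where
  toFun x := fun v' => ∑ v ∈ Finset.univ.filter (fun v => γ.vMap v = v'), x v
  map_add' x y := by
    funext v'
    simp [Finset.sum_add_distrib]
  map_smul' c x := by
    funext v'
    simp [Finset.mul_sum]

/-- The pushforward `γ_* P = P ∖ F` of a set of edges, as a subset of `E(G')`. -/
def pushE (P : Finset G.E) : Finset G'.E :=
  Finset.univ.filter fun e' => (γ.eEquiv e' : {e : G.E // e ∉ γ.F}).1 ∈ P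

/-- The graph of the induced map `γ̄ : V(G/P) → V(G'/P')` on components. -/
def compMapsTo (P : Finset G.E) (P' : Finset G'.E)
    (x : G.CompV P) (x' : G'.CompV P') : Prop :=
  ∃ v : G.V, Quot.mk (G.PAdj P) v = x ∧ Quot.mk (G'.PAdj P') (γ.vMap v) = x'

/-- The pushforward sign function: `s'(v') = Σ_{v ∈ γ̄⁻¹(v')} s(v)`. -/
def pushS (P : Finset G.E) (s : G.CompV P → ZMod 2) :
    G'.CompV (γ.pushE P) → ZMod 2 :=
  fun x' => ∑ x ∈ Finset.univ.filter
    (fun x => γ.compMapsTo P (γ.pushE P) x x'), s x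

/-- `γ_* σ = σ'` for spin structures. -/
def SpinMapsTo (σ : SpinStructure G) (σ' : SpinStructure G') : Prop :=
  σ'.P = γ.pushE σ.P ∧ HEq σ'.s (γ.pushS σ.P σ.s)

end Contraction

/-- An automorphism of a graph: weight-preserving bijection on vertices,
bijection on edges compatible with endpoints, fixing every leg. -/
structure GraphAut (G : WLGraph) where
  vE : G.V ≃ G.V
  eE : G.E ≃ G.E
  ends_compat : ∀ e, G.ends (eE e) = (G.ends e).map vE
  w_compat : ∀ v, G.w (vE v) = G.w v
  leg_fix : ∀ l, G.legEnd l = vE (G.legEnd l)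

namespace GraphAut

variable {G : WLGraph}

/-- Composition of automorphisms (`α.comp β` acts by `β` first, then `α`). -/
def comp (α β : GraphAut G) : GraphAut G where
  vE := β.vE.trans α.vE
  eE := β.eE.trans α.eE
  ends_compat e := by
    simp only [Equiv.trans_apply, Equiv.coe_trans]
    rw [α.ends_compat, β.ends_compat, Sym2.map_map]
  w_compat v := by
    simp only [Equiv.trans_apply]
    rw [α.w_compat, β.w_compat]
  leg_fix l := by
    simp only [Equiv.trans_apply]
    rw [← β.leg_fix, ← α.leg_fix]

/-- `α_* σ = σ'` for an automorphism `α` and spin structures `σ, σ'`. -/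
def SpinMapsTo (α : GraphAut G) (σ σ' : SpinStructure G) : Prop :=
  σ'.P = σ.P.image α.eE ∧
  ∀ v : G.V, σ'.s (Quot.mk (G.PAdj σ'.P) (α.vE v)) = σ.s (Quot.mk (G.PAdj σ.P) v)

/-- `α` preserves the spin structure `σ`, i.e. `α_*(P,s) = (P,s)`. -/
def PreservesSpin (α : GraphAut G) (σ : SpinStructure G) : Prop :=
  α.SpinMapsTo σ σ

end GraphAut

/-- The graph `P̄ = G - R°` where `R = E ∖ P`: same vertices, edges `P`, and
the legs of `G` together with a pair of new legs for each edge of `R`, placed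
at its two endpoints. -/
def WLGraph.legify (G : WLGraph) (P : Finset G.E) : WLGraph where
  V := G.V
  E := {e : G.E // e ∈ P}
  Lg := G.Lg ⊕ ({e : G.E // e ∉ P} × Bool)
  fV := G.fV
  fE := inferInstance
  fL := inferInstance
  dV := G.dV
  dE := inferInstance
  dL := inferInstance
  neV := G.neV
  ends := fun e => G.ends e.1
  legEnd := fun l =>
    match l with
    | Sum.inl l => G.legEnd l
    | Sum.inr (e, b) => if b then (G.endPair e.1).1 else (G.endPair e.1).2
  w := G.w

/-- `G` is a stable graph of genus `g` with `n` legs. -/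
def StG (g n : ℕ) (G : WLGraph) : Prop := G.Stable ∧ G.genus = g ∧ G.numLegs = n

/-- Objects of the poset `C_{g,n}` before taking isomorphism classes. -/
def CycObj : Type 1 := Σ G : WLGraph, Finset G.E

/-- Objects of the poset `SP_{g,n}` before taking isomorphism classes. -/
def SpinObj : Type 1 := Σ G : WLGraph, SpinStructure G

/-- Order on graphs: `G ≥ G'` iff there is a contraction `G → G'`. -/
def GraphGe (G G' : WLGraph) : Prop := Nonempty (Contraction G G')

/-- Order on `C_{g,n}`: `(G,P) ≥ (G',P')` iff some contraction pushes `P` to `P'`. -/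
def CycGe (a b : CycObj) : Prop := ∃ γ : Contraction a.1 b.1, γ.pushE a.2 = b.2

/-- Order on `SP_{g,n}`: `(G,P,s) ≥ (G',P',s')` iff some contraction pushes
`(P,s)` to `(P',s')`. -/
def SpinGe (a b : SpinObj) : Prop := ∃ γ : Contraction a.1 b.1, γ.SpinMapsTo a.2 b.2

/-- `q : X → Y` is a quotient of posets (for the `≥`-relations `geA`, `geB`):
it is surjective, order-preserving, and any relation downstairs lifts. -/
def IsPosetQuotient {α : Sort*} {β : Sort*}
    (geA : α → α → Prop) (geB : β → β → Prop) (q : α → β) : Prop :=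
  Function.Surjective q ∧
  (∀ a a', geA a a' → geB (q a) (q a')) ∧
  (∀ b b', geB b b' → ∃ a a', q a = b ∧ q a' = b' ∧ geA a a')

/-- Strict order `x > y` associated to a `≥`-relation. -/
def StrictGt {α : Sort*} (ge : α → α → Prop) (x y : α) : Prop := ge x y ∧ ¬ ge y x

/-- `x` covers `y`. -/
def Covers {α : Sort*} (ge : α → α → Prop) (x y : α) : Prop :=
  StrictGt ge x y ∧ ¬ ∃ z, StrictGt ge x z ∧ StrictGt ge z y

/-- `ρ` is a rank function for the `≥`-relation `ge`. -/
def IsRankFn {α : Sort*} (ge : α → α → Prop) (ρ : α → ℕ) : Prop :=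
  (∀ x y, StrictGt ge x y → ρ y < ρ x) ∧
  (∀ x y, Covers ge x y → ρ x = ρ y + 1)


/-! ### Auxiliary constructions for Statement 9 -/

lemma WLGraph.isCyclic_empty (G : WLGraph) : G.IsCyclic ∅ := by
  show G.boundary (G.indicator ∅) = 0
  have : G.indicator ∅ = 0 := by funext e; simp [WLGraph.indicator]
  rw [this, map_zero]

lemma WLGraph.numComp_eq_one (G : WLGraph) (h : G.Connected) : G.numComp = 1 := by
  have hs : Subsingleton (G.CompV Finset.univ) := by
    constructor
    intro a b
    induction a using Quot.ind with
    | _ u =>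
    induction b using Quot.ind with
    | _ v => exact Quot.eqvGen_sound (h u v)
  exact Nat.card_eq_one_iff_unique.mpr ⟨hs, inferInstance⟩

/-- The one-vertex graph of weight `g` with `n` legs and no edges. -/
def PtGraph (g n : ℕ) : WLGraph where
  V := Unit
  E := Empty
  Lg := Fin n
  fV := inferInstance
  fE := inferInstance
  fL := inferInstance
  dV := inferInstance
  dE := inferInstance
  dL := inferInstance
  neV := inferInstance
  ends := fun e => e.elim
  legEnd := fun _ => ()
  w := fun _ => g

lemma ptGraph_connected (g n : ℕ) : (PtGraph g n).Connected := by
  intro u v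
  have : u = v := Subsingleton.elim (α := Unit) u v
  rw [this]
  exact Relation.EqvGen.refl v

lemma ptGraph_stG (g n : ℕ) (h : 2 < 2 * g + n) : StG g n (PtGraph g n) := by
  haveI hE : IsEmpty (PtGraph g n).E := inferInstanceAs (IsEmpty Empty)
  refine ⟨⟨ptGraph_connected g n, ?_⟩, ?_, ?_⟩
  · intro v
    have hdeg : (PtGraph g n).deg v = 0 := by
      unfold WLGraph.deg
      rw [Finset.univ_eq_empty, Finset.sum_empty]
    have hlegs : (PtGraph g n).legsAt v = n := by
      unfold WLGraph.legsAt
      have : (Finset.univ.filter fun l : (PtGraph g n).Lg => (PtGraph g n).legEnd l = v)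
          = Finset.univ := by
        refine Finset.filter_true_of_mem fun l _ => ?_
        exact Subsingleton.elim (α := Unit) _ _
      rw [this, Finset.card_univ]
      exact Fintype.card_fin n
    rw [hdeg, hlegs]
    have hw : (PtGraph g n).w v = g := rfl
    omega
  · unfold WLGraph.genus WLGraph.b1
    have h1 : (∑ v, (PtGraph g n).w v) = g := by
      show (∑ _v : Unit, g) = g
      simp
    have h2 : Fintype.card (PtGraph g n).E = 0 := by
      exact Fintype.card_eq_zero
    have h3 : (PtGraph g n).numComp = 1 := WLGraph.numComp_eq_one _ (ptGraph_connected g n)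
    have h4 : Fintype.card (PtGraph g n).V = 1 :=
      Fintype.card_eq_one_iff.mpr ⟨(), fun u => Subsingleton.elim (α := Unit) u ()⟩
    rw [h1, h2, h3, h4]
    omega
  · show Fintype.card (Fin n) = n
    exact Fintype.card_fin n

/-- Every stable graph of genus `g` with `n` legs contracts to the point. -/
def ptContraction (g n : ℕ) (G : WLGraph) (hs : StG g n G) :
    Contraction G (PtGraph g n) where
  F := Finset.univ
  vMap := fun _ => ()
  eEquiv :=
    { toFun := fun e => e.elim
      invFun := fun e => absurd (Finset.mem_univ e.1) e.2
      left_inv := fun e => e.elim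
      right_inv := fun e => absurd (Finset.mem_univ e.1) e.2 }
  lEquiv := Fintype.equivFinOfCardEq hs.2.2 |>.symm
  vSurj := fun u => ⟨Classical.choice G.neV, Subsingleton.elim (α := Unit) _ _⟩
  ends_compat := fun e' => e'.elim
  leg_compat := fun _ => rfl
  collapse := fun _ _ _ _ _ _ => rfl
  fiber_conn := fun u v _ => hs.1.1 u v
  w_compat := by
    intro v'
    have hc : G.numComp = 1 := WLGraph.numComp_eq_one G hs.1.1
    have hg : G.genus = g := hs.2.1
    show g = _
    cases v'
    have e : ∀ {α : Type} [Fintype α] (p : α → Prop) (inst : DecidablePred p),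
        (∀ x, p x) → @Finset.filter α p inst Finset.univ = Finset.univ :=
      fun p _ hp => Finset.filter_true_of_mem fun x _ => hp x
    rw [e, e, Finset.card_univ, Finset.card_univ, ← hg]
    · unfold WLGraph.genus WLGraph.b1
      rw [hc]
    all_goals intros; rfl

/-- Assume `2g − 2 + n > 0`.  The poset `C_{g,n}` of pairs
`(G,P)` with `G` a stable graph of genus `g` with `n` legs and `P ∈ C_G` is
connected, and the forgetful map `C_{g,n} → S_{g,n}`, `(G,P) ↦ G`, is a
quotient of posets. -/
theorem cyc_poset_connected_and_forgetful_quotient (g n : ℕ)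
    (h : 2 < 2 * g + n) :
    (∀ a b : {x : CycObj // StG g n x.1 ∧ x.1.IsCyclic x.2},
      Relation.EqvGen
        (fun x y : {x : CycObj // StG g n x.1 ∧ x.1.IsCyclic x.2} =>
          CycGe x.1 y.1 ∨ CycGe y.1 x.1) a b) ∧
    IsPosetQuotient
      (fun x y : {x : CycObj // StG g n x.1 ∧ x.1.IsCyclic x.2} =>
        CycGe x.1 y.1)
      (fun X Y : {H : WLGraph // StG g n H} => GraphGe X.1 Y.1)
      (fun x => ⟨x.1.1, x.2.1⟩) := by
  haveI hE : IsEmpty (PtGraph g n).E := inferInstanceAs (IsEmpty Empty)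
  -- the point object
  set pt : {x : CycObj // StG g n x.1 ∧ x.1.IsCyclic x.2} :=
    ⟨⟨PtGraph g n, ∅⟩, ptGraph_stG g n h, (PtGraph g n).isCyclic_empty⟩ with hpt
  have hge : ∀ a : {x : CycObj // StG g n x.1 ∧ x.1.IsCyclic x.2},
      CycGe a.1 pt.1 := by
    intro a
    refine ⟨ptContraction g n a.1.1 a.2.1, ?_⟩
    exact Finset.eq_empty_of_isEmpty _
  constructor
  · intro a b
    exact Relation.EqvGen.trans a pt b
      (Relation.EqvGen.rel a pt (Or.inl (hge a)))
      (Relation.EqvGen.symm b pt (Relation.EqvGen.rel b pt (Or.inl (hge b))))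
  · refine ⟨?_, ?_, ?_⟩
    · intro X
      exact ⟨⟨⟨X.1, ∅⟩, X.2, X.1.isCyclic_empty⟩, rfl⟩
    · rintro a a' ⟨γ, -⟩
      exact ⟨γ⟩
    · rintro b b' ⟨γ⟩
      refine ⟨⟨⟨b.1, ∅⟩, b.2, b.1.isCyclic_empty⟩,
        ⟨⟨b'.1, ∅⟩, b'.2, b'.1.isCyclic_empty⟩, rfl, rfl, γ, ?_⟩
      show Finset.filter _ _ = (∅ : Finset b'.1.E)
      refine Finset.eq_empty_of_forall_notMem fun e' he' => ?_
      simp only [Contraction.pushE, Finset.mem_filter] at he'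
      exact absurd he'.2 (Finset.notMem_empty _)

end
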